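/- For a space X: if C_p(X) satisfies S_1(A, B_f) for every f (from sequences of 1-dense sets one can select singletons forming a set 1-dense at f), then C_p(X) satisfies S_1(A, A): from every sequence of 1-dense subsets one can select one function from each so that the selection is 1-dense. -/

import Mathlib

open Set Filter Topology

/-- The set of continuous real-valued functions on `X`. The ambient space
`X → ℝ` carries the product topology, i.e. the topology of pointwise
convergence, so closures and neighborhoods below are those of `C_p(X)`. -/
def Cp (X : Type*) [TopologicalSpace X] : Set (X → ℝ) := {f | Continuous f}

/-- `A` clusters at `y` but omits `y` (the family Ω_y). -/
def OmegaAt {Y : Type*} [TopologicalSpace Y] (y : Y) (A : Set Y) : Prop :=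
  y ∈ closure A ∧ y ∉ A

/-- `A` converges to `y` (the family Γ_y): infinite, omits `y`, and almost
contained in each neighborhood of `y`. -/
def GammaAt {Y : Type*} [TopologicalSpace Y] (y : Y) (A : Set Y) : Prop :=
  A.Infinite ∧ y ∉ A ∧ ∀ W ∈ 𝓝 y, (A \ W).Finite

/-- An infinite family of sets such that each point lies in all but finitely
many members. -/
def GammaFam {X : Type*} (U : Set (Set X)) : Prop :=
  U.Infinite ∧ ∀ x : X, {u ∈ U | x ∉ u}.Finite

/-- `U` is a γ-cover of `X`. -/
def IsGammaCover {X : Type*} [TopologicalSpace X] (U : Set (Set X)) : Prop :=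
  (∀ u ∈ U, IsOpen u) ∧ (univ : Set X) ∉ U ∧ GammaFam U

/-- `U` is an ω-cover of `X`: a nontrivial open cover such that every finite
subset of `X` is contained in some member. -/
def IsOmegaCover {X : Type*} [TopologicalSpace X] (U : Set (Set X)) : Prop :=
  (∀ u ∈ U, IsOpen u) ∧ (univ : Set X) ∉ U ∧
    ∀ F : Set X, F.Finite → ∃ u ∈ U, F ⊆ u

/-- A zero-set: the preimage of `0` under a continuous real function. -/
def IsZeroSet {X : Type*} [TopologicalSpace X] (Z : Set X) : Prop :=
  ∃ f : X → ℝ, Continuous f ∧ Z = f ⁻¹' {0}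

/-- A cozero-set: the complement of a zero-set. -/
def IsCozeroSet {X : Type*} [TopologicalSpace X] (U : Set X) : Prop :=
  ∃ f : X → ℝ, Continuous f ∧ U = {x | f x ≠ 0}

/-- A γ_F-shrinkable γ-cover: a γ-cover by cozero-sets admitting a zero-set
shrinking which is itself a γ-family. -/
def GammaFShrinkable {X : Type*} [TopologicalSpace X] (U : Set (Set X)) : Prop :=
  IsGammaCover U ∧ (∀ u ∈ U, IsCozeroSet u) ∧
    ∃ F : Set X → Set X, (∀ u ∈ U, IsZeroSet (F u) ∧ F u ⊆ u) ∧ GammaFam (F '' U)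

/-- `A` is 1-dense in `C_p(X)`. -/
def OneDense {X : Type*} (A : Set (X → ℝ)) : Prop :=
  ∀ x : X, ∀ W : Set ℝ, IsOpen W → W.Nonempty → ∃ f ∈ A, f x ∈ W

/-- `A` is 1-dense at the function `f`. -/
def OneDenseAt {X : Type*} (f : X → ℝ) (A : Set (X → ℝ)) : Prop :=
  ∀ x : X, ∀ ε : ℝ, 0 < ε → ∃ h ∈ A, |h x - f x| < ε

/-- `A` is `n`-dense in `C_p(X)`. -/
def NDense {X : Type*} (n : ℕ) (A : Set (X → ℝ)) : Prop :=
  ∀ x : Fin n → X, Function.Injective x → ∀ W : Fin n → Set ℝ,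
    (∀ i, IsOpen (W i) ∧ (W i).Nonempty) → ∃ f ∈ A, ∀ i, f (x i) ∈ W i

/-- If `C_p(X)` satisfies S_1(A, B_f) for every `f`, then `C_p(X)` satisfies
S_1(A, A). -/
theorem stmt14 {X : Type*} [TopologicalSpace X]
    (h : ∀ f ∈ Cp X, ∀ A : ℕ → Set (X → ℝ), (∀ n, A n ⊆ Cp X ∧ OneDense (A n)) →
      ∃ g : ℕ → X → ℝ, (∀ n, g n ∈ A n) ∧ OneDenseAt f (range g)) :
    ∀ A : ℕ → Set (X → ℝ), (∀ n, A n ⊆ Cp X ∧ OneDense (A n)) →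
      ∃ g : ℕ → X → ℝ, (∀ n, g n ∈ A n) ∧ OneDense (range g) := by
  intro A hA
  -- enumerate rationals
  let q : ℕ → ℚ := (Denumerable.eqv ℚ).symm
  -- for each i, apply hypothesis with constant function q i to the subsequence
  have key : ∀ i : ℕ, ∃ g : ℕ → X → ℝ,
      (∀ j, g j ∈ A (Nat.pairEquiv (i, j))) ∧
      OneDenseAt (fun _ => (q i : ℝ)) (range g) := by
    intro i
    exact h (fun _ => (q i : ℝ)) continuous_const
      (fun j => A (Nat.pairEquiv (i, j))) (fun j => hA _)
  choose G hG1 hG2 using key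
  refine ⟨fun n => G (Nat.unpair n).1 (Nat.unpair n).2, ?_, ?_⟩
  · intro n
    have := hG1 (Nat.unpair n).1 (Nat.unpair n).2
    rwa [show Nat.pairEquiv ((Nat.unpair n).1, (Nat.unpair n).2) = n from Nat.pair_unpair n] at this
  · intro x W hW hWne
    obtain ⟨w, hw⟩ := hWne
    obtain ⟨ε, hε, hball⟩ := Metric.isOpen_iff.mp hW w hw
    obtain ⟨r, hr⟩ := exists_rat_near w (half_pos hε)
    obtain ⟨i, hi⟩ : ∃ i, q i = r := ⟨(Denumerable.eqv ℚ) r, by simp [q]⟩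
    obtain ⟨f, hfmem, hfx⟩ := hG2 i x (ε / 2) (half_pos hε)
    obtain ⟨j, rfl⟩ := hfmem
    refine ⟨G i j, ⟨Nat.pairEquiv (i, j), ?_⟩, ?_⟩
    · show G (Nat.unpair (Nat.pair i j)).1 (Nat.unpair (Nat.pair i j)).2 = G i j; simp [Nat.unpair_pair]
    · apply hball
      rw [Metric.mem_ball, Real.dist_eq]
      calc |G i j x - w| = |(G i j x - q i) + ((q i : ℝ) - w)| := by ring_nf
        _ ≤ |G i j x - q i| + |(q i : ℝ) - w| := abs_add_le _ _
        _ < ε / 2 + ε / 2 := by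
            refine add_lt_add hfx ?_
            rw [hi, abs_sub_comm]
            exact hr
        _ = ε := add_halves ε
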